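/- Let p be a prime and H = {h₁,…,h_d} a finite set of d distinct non-negative integers. Then the upper natural density of N_{{p}}^H satisfies δ⁺(N_{{p}}^H) ≤ d/(p+1). -/

import Mathlib

open Filter Topology
open scoped symmDiff Classical

/-- `Ω_P(n)`: number of prime factors of `n` (with multiplicity) lying in `P`. -/
noncomputable def OmegaP (P : Set ℕ) (n : ℕ) : ℕ :=
  n.factorization.sum fun p k => if p ∈ P then k else 0

/-- `λ_P`, the completely multiplicative function equal to `-1` at primes in `P`
and `1` at all other primes. -/
noncomputable def lambdaP (P : Set ℕ) (n : ℕ) : ℝ :=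
  (-1 : ℝ) ^ OmegaP P n

/-- `Λ_P^H(n) = ∏_{h ∈ H} λ_P(n + h)` (empty product is `1`). -/
noncomputable def LambdaPH (P : Set ℕ) (H : Finset ℕ) (n : ℕ) : ℝ :=
  ∏ h ∈ H, lambdaP P (n + h)

/-- `N_P^H = {n : Λ_P^H(n) = -1}`. -/
def NPH (P : Set ℕ) (H : Finset ℕ) : Set ℕ :=
  {n : ℕ | LambdaPH P H n = -1}

/-- Number of elements of `A` in `[1, x]`. -/
noncomputable def countIn (A : Set ℕ) (x : ℕ) : ℕ :=
  ((Finset.Icc 1 x).filter (fun n => n ∈ A)).card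

/-- `A ⊆ ℕ` has natural density `d`: `|A ∩ [1,x]|/x → d`. -/
def HasDensity (A : Set ℕ) (d : ℝ) : Prop :=
  Filter.Tendsto (fun x : ℕ => (countIn A x : ℝ) / x) Filter.atTop (nhds d)

/-- The Cesàro average `(1/x) ∑_{n ≤ x} Λ_P^H(n)`. -/
noncomputable def cesaroAvg (P : Set ℕ) (H : Finset ℕ) (x : ℕ) : ℝ :=
  (∑ n ∈ Finset.Icc 1 x, LambdaPH P H n) / x

/-- A set of naturals is small if the sum of reciprocals of its elements converges. -/
def SmallSet (P : Set ℕ) : Prop :=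
  Summable fun p : P => (1 : ℝ) / (p : ℝ)

/-- `C(r,s) = {n : n ≡ -r (mod s)}`. -/
def Cset (r s : ℕ) : Set ℕ :=
  {n : ℕ | (n : ℤ) ≡ -(r : ℤ) [ZMOD (s : ℤ)]}

/-- The set of `P`-smooth positive integers. -/
def SmoothP (P : Set ℕ) : Set ℕ :=
  {n : ℕ | 0 < n ∧ ∀ p : ℕ, p.Prime → p ∣ n → p ∈ P}

/-- `𝒜_P`: all finite unions of sets from `{∅} ∪ {C(r,n) : r ∈ ℕ, n ∈ S_P}`. -/
def calA (P : Set ℕ) : Set (Set ℕ) :=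
  {A : Set ℕ | ∃ F : Finset (ℕ × ℕ), (∀ q ∈ F, q.2 ∈ SmoothP P) ∧
    A = ⋃ q ∈ F, Cset q.1 q.2}


private lemma count_dvd (q h x : ℕ) :
    ((Finset.Icc 1 x).filter (fun n => q ∣ n + h)).card = (x + h) / q - h / q := by
  have key : ((Finset.Ioc h (x+h)).filter (fun n => q ∣ n)).card = (x+h)/q - h/q := by
    have hunion : Finset.Ioc 0 h ∪ Finset.Ioc h (x+h) = Finset.Ioc 0 (x+h) :=
      Finset.Ioc_union_Ioc_eq_Ioc (Nat.zero_le h) (Nat.le_add_left h x)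
    have hdisj : Disjoint ((Finset.Ioc 0 h).filter (fun n => q ∣ n))
        ((Finset.Ioc h (x+h)).filter (fun n => q ∣ n)) := by
      apply Finset.disjoint_filter_filter
      rw [Finset.disjoint_left]
      intro a ha hb
      simp only [Finset.mem_Ioc] at ha hb
      omega
    have := Finset.card_union_of_disjoint hdisj
    rw [← Finset.filter_union, hunion] at this
    rw [Nat.Ioc_filter_dvd_card_eq_div, Nat.Ioc_filter_dvd_card_eq_div] at this
    omega
  rw [← key]
  apply Finset.card_bij (fun n _ => n + h)
  · intro a ha
    simp only [Finset.mem_filter, Finset.mem_Icc, Finset.mem_Ioc] at ha ⊢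
    omega
  · intro a ha b hb hab
    omega
  · intro b hb
    simp only [Finset.mem_filter, Finset.mem_Ioc] at hb
    refine ⟨b - h, ?_, by omega⟩
    simp only [Finset.mem_filter, Finset.mem_Icc]
    refine ⟨⟨by omega, by omega⟩, ?_⟩
    have : b - h + h = b := by omega
    rw [this]; exact hb.2

private lemma nat_div_bounds (a q : ℕ) (hq : 0 < q) :
    (a : ℝ) / q - 1 < ((a / q : ℕ) : ℝ) ∧ ((a / q : ℕ) : ℝ) ≤ (a : ℝ) / q := by
  have h1 : q * (a / q) ≤ a := Nat.mul_div_le a q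
  have h2 : a < q * (a / q) + q := by
    have := Nat.div_add_mod a q
    have := Nat.mod_lt a hq
    omega
  have hq' : (0:ℝ) < q := by exact_mod_cast hq
  have h1' : (q:ℝ) * ((a / q : ℕ) : ℝ) ≤ a := by exact_mod_cast h1
  have h2' : (a:ℝ) < q * ((a / q : ℕ) : ℝ) + q := by exact_mod_cast h2
  constructor
  · rw [sub_lt_iff_lt_add, div_lt_iff₀ hq']
    nlinarith
  · rw [le_div_iff₀ hq']
    nlinarith

private lemma count_dvd_le (q h x : ℕ) (hq : 0 < q) :
    (((Finset.Icc 1 x).filter (fun n => q ∣ n + h)).card : ℝ) ≤ (x:ℝ) / q + 1 := by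
  rw [count_dvd]
  have hle : h / q ≤ (x + h) / q := Nat.div_le_div_right (Nat.le_add_left h x)
  rw [Nat.cast_sub hle]
  have b1 := (nat_div_bounds (x+h) q hq).2
  have b2 := (nat_div_bounds h q hq).1
  have : ((x:ℝ) + h) / q = (x:ℝ)/q + (h:ℝ)/q := add_div _ _ _
  push_cast at b1
  linarith

private lemma count_dvd_ge (q h x : ℕ) (hq : 0 < q) :
    (x:ℝ) / q - 1 ≤ (((Finset.Icc 1 x).filter (fun n => q ∣ n + h)).card : ℝ) := by
  rw [count_dvd]
  have hle : h / q ≤ (x + h) / q := Nat.div_le_div_right (Nat.le_add_left h x)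
  rw [Nat.cast_sub hle]
  have b1 := (nat_div_bounds (x+h) q hq).1
  have b2 := (nat_div_bounds h q hq).2
  have : ((x:ℝ) + h) / q = (x:ℝ)/q + (h:ℝ)/q := add_div _ _ _
  push_cast at b1
  linarith

private lemma omegaP_singleton (p n : ℕ) : OmegaP {p} n = n.factorization p := by
  unfold OmegaP
  rw [Finsupp.sum]
  simp only [Set.mem_singleton_iff]
  rw [Finset.sum_ite_eq' n.factorization.support p]
  split_ifs with hmem
  · rfl
  · exact (Finsupp.notMem_support_iff.mp hmem).symm

private lemma mem_NPH_exists (p : ℕ) (H : Finset ℕ) (n : ℕ) (hn : n ∈ NPH {p} H) :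
    ∃ h ∈ H, Odd ((n + h).factorization p) := by
  by_contra hcon
  push_neg at hcon
  have h1 : LambdaPH {p} H n = 1 := by
    unfold LambdaPH lambdaP
    rw [Finset.prod_congr rfl (fun h hh => ?_), Finset.prod_const_one]
    rw [omegaP_singleton]
    exact Even.neg_one_pow (Nat.not_odd_iff_even.mp (hcon h hh))
  have h2 : LambdaPH {p} H n = -1 := hn
  rw [h1] at h2; norm_num at h2

private lemma geom_id (p : ℕ) (hp : 1 < p) (k : ℕ) :
    ∑ j ∈ Finset.range k, ((1/(p:ℝ))^(2*j+1) - (1/(p:ℝ))^(2*j+2))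
      = (1 - (1/(p:ℝ))^(2*k)) / ((p:ℝ) + 1) := by
  have hp0 : (p:ℝ) ≠ 0 := by positivity
  have hp1 : (p:ℝ) + 1 ≠ 0 := by positivity
  induction k with
  | zero => simp
  | succ k ih =>
    rw [Finset.sum_range_succ, ih]
    have e1 : 2*(k+1) = (2*k+1)+1 := by omega
    have e2 : 2*k+2 = (2*k+1)+1 := by omega
    have e3 : 2*k+1 = (2*k)+1 := by omega
    rw [e1, e2, e3, pow_succ, pow_succ]
    field_simp
    ring_nf
    rw [mul_inv_cancel₀ hp0]
    ring


private lemma count_odd_le (p : ℕ) (hp : p.Prime) (h x k : ℕ) :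
    (((Finset.Icc 1 x).filter (fun n => Odd ((n + h).factorization p))).card : ℝ)
      ≤ (x : ℝ) / ((p:ℝ)+1) + (x:ℝ) * (1/(p:ℝ))^(2*k+1) + (2*(k:ℝ)+1) := by
  set F : ℕ → Finset ℕ := fun s => (Finset.Icc 1 x).filter (fun n => p^s ∣ n + h) with hFdef
  have hsub : (Finset.Icc 1 x).filter (fun n => Odd ((n + h).factorization p))
      ⊆ ((Finset.range k).biUnion (fun j => F (2*j+1) \ F (2*j+2))) ∪ F (2*k+1) := by
    intro n hn
    simp only [Finset.mem_filter] at hn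
    obtain ⟨hnI, hodd⟩ := hn
    have hpos : n + h ≠ 0 := by
      simp only [Finset.mem_Icc] at hnI; omega
    rw [Finset.mem_union]
    by_cases hcase : (n+h).factorization p ≤ 2*k
    · left
      obtain ⟨j, hj⟩ := hodd
      rw [Finset.mem_biUnion]
      refine ⟨j, Finset.mem_range.mpr (by omega), ?_⟩
      rw [Finset.mem_sdiff]
      refine ⟨Finset.mem_filter.mpr ⟨hnI,
        (hp.pow_dvd_iff_le_factorization hpos).mpr (by omega)⟩, fun hmem => ?_⟩
      have := (hp.pow_dvd_iff_le_factorization hpos).mp (Finset.mem_filter.mp hmem).2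
      omega
    · right
      exact Finset.mem_filter.mpr ⟨hnI, (hp.pow_dvd_iff_le_factorization hpos).mpr (by omega)⟩
  have hF : ∀ j : ℕ, F (2*j+2) ⊆ F (2*j+1) := by
    intro j n hn
    rw [Finset.mem_filter] at hn ⊢
    exact ⟨hn.1, dvd_trans (pow_dvd_pow p (by omega)) hn.2⟩
  have hcard : ((Finset.Icc 1 x).filter (fun n => Odd ((n + h).factorization p))).card
      ≤ (∑ j ∈ Finset.range k, (F (2*j+1) \ F (2*j+2)).card) + (F (2*k+1)).card :=
    (Finset.card_le_card hsub).trans ((Finset.card_union_le _ _).trans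
      (Nat.add_le_add_right (Finset.card_biUnion_le) _))
  have hppos : ∀ s : ℕ, 0 < p ^ s := fun s => pow_pos hp.pos s
  have hcast : (((Finset.Icc 1 x).filter (fun n => Odd ((n + h).factorization p))).card : ℝ)
      ≤ (∑ j ∈ Finset.range k, (((F (2*j+1)).card : ℝ) - ((F (2*j+2)).card : ℝ)))
        + ((F (2*k+1)).card : ℝ) := by
    calc (((Finset.Icc 1 x).filter (fun n => Odd ((n + h).factorization p))).card : ℝ)
        ≤ ((∑ j ∈ Finset.range k, (F (2*j+1) \ F (2*j+2)).card : ℕ) : ℝ)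
          + ((F (2*k+1)).card : ℝ) := by exact_mod_cast hcard
      _ = _ := by
          congr 1
          push_cast
          refine Finset.sum_congr rfl (fun j _ => ?_)
          rw [Finset.card_sdiff_of_subset (hF j), Nat.cast_sub (Finset.card_le_card (hF j))]
  -- now bound each term
  have hterm : ∀ j ∈ Finset.range k,
      ((F (2*j+1)).card : ℝ) - ((F (2*j+2)).card : ℝ)
        ≤ (x:ℝ) * ((1/(p:ℝ))^(2*j+1) - (1/(p:ℝ))^(2*j+2)) + 2 := by
    intro j _
    have b1 := count_dvd_le (p^(2*j+1)) h x (hppos _)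
    have b2 := count_dvd_ge (p^(2*j+2)) h x (hppos _)
    have hpne : (p:ℝ) ≠ 0 := Nat.cast_ne_zero.mpr hp.pos.ne'
    have e1 : (x:ℝ) / ((p:ℕ)^(2*j+1) : ℕ) = (x:ℝ) * (1/(p:ℝ))^(2*j+1) := by
      push_cast; rw [one_div, inv_pow, div_eq_mul_inv]
    have e2 : (x:ℝ) / ((p:ℕ)^(2*j+2) : ℕ) = (x:ℝ) * (1/(p:ℝ))^(2*j+2) := by
      push_cast; rw [one_div, inv_pow, div_eq_mul_inv]
    rw [hFdef]
    simp only []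
    rw [e1] at b1
    rw [e2] at b2
    linarith
  have hlast : ((F (2*k+1)).card : ℝ) ≤ (x:ℝ) * (1/(p:ℝ))^(2*k+1) + 1 := by
    have b1 := count_dvd_le (p^(2*k+1)) h x (hppos _)
    have e1 : (x:ℝ) / ((p:ℕ)^(2*k+1) : ℕ) = (x:ℝ) * (1/(p:ℝ))^(2*k+1) := by
      push_cast; rw [one_div, inv_pow, div_eq_mul_inv]
    rw [e1] at b1
    exact b1
  have hsum : (∑ j ∈ Finset.range k, (((F (2*j+1)).card : ℝ) - ((F (2*j+2)).card : ℝ)))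
      ≤ (x:ℝ) * ((1 - (1/(p:ℝ))^(2*k)) / ((p:ℝ) + 1)) + 2*k := by
    calc _ ≤ ∑ j ∈ Finset.range k,
          ((x:ℝ) * ((1/(p:ℝ))^(2*j+1) - (1/(p:ℝ))^(2*j+2)) + 2) := Finset.sum_le_sum hterm
      _ = (x:ℝ) * ∑ j ∈ Finset.range k, ((1/(p:ℝ))^(2*j+1) - (1/(p:ℝ))^(2*j+2)) + 2*k := by
          rw [Finset.sum_add_distrib, Finset.sum_const, ← Finset.mul_sum]
          simp [mul_comm]
      _ = _ := by rw [geom_id p hp.one_lt k]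
  have hx0 : (0:ℝ) ≤ (x:ℝ) := Nat.cast_nonneg x
  have hr : (0:ℝ) ≤ (1/(p:ℝ))^(2*k) := by positivity
  have hp1 : (0:ℝ) < (p:ℝ) + 1 := by positivity
  have : (x:ℝ) * ((1 - (1/(p:ℝ))^(2*k)) / ((p:ℝ) + 1)) ≤ (x:ℝ) / ((p:ℝ)+1) := by
    have h2 : (x:ℝ)*(1-(1/(p:ℝ))^(2*k)) ≤ (x:ℝ) := by nlinarith
    calc (x:ℝ) * ((1 - (1/(p:ℝ))^(2*k)) / ((p:ℝ) + 1))
        = (x:ℝ)*(1-(1/(p:ℝ))^(2*k))/((p:ℝ)+1) := by ring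
      _ ≤ (x:ℝ)/((p:ℝ)+1) := (div_le_div_iff_of_pos_right hp1).mpr h2
  linarith

/-- For a prime `p` and a finite set `H` with `d` elements, the upper
natural density of `N_{{p}}^H` is at most `d/(p+1)`. -/
theorem stmt_15 (p : ℕ) (hp : p.Prime) (H : Finset ℕ) :
    Filter.limsup (fun x : ℕ => (countIn (NPH {p} H) x : ℝ) / x) Filter.atTop
      ≤ (H.card : ℝ) / ((p : ℝ) + 1) := by
  set d : ℝ := (H.card : ℝ) with hd
  set f : ℕ → ℝ := fun x => (countIn (NPH {p} H) x : ℝ) / x with hf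
  have hf0 : ∀ x, 0 ≤ f x := fun x => by positivity
  have hppos : (0:ℝ) < p := by exact_mod_cast hp.pos
  have hd0 : 0 ≤ d := Nat.cast_nonneg _
  have key : ∀ k : ℕ, Filter.limsup f Filter.atTop
      ≤ d/((p:ℝ)+1) + d*(1/(p:ℝ))^(2*k+1) := by
    intro k
    set L : ℝ := d/((p:ℝ)+1) + d*(1/(p:ℝ))^(2*k+1) with hL
    set g : ℕ → ℝ := fun x => L + d*(2*(k:ℝ)+1)/x with hgdef
    have hgt : Filter.Tendsto g Filter.atTop (nhds L) := by
      simpa using tendsto_const_nhds.add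
        (tendsto_const_div_atTop_nhds_zero_nat (d*(2*(k:ℝ)+1)))
    have hfg : ∀ᶠ x in Filter.atTop, f x ≤ g x := by
      filter_upwards [Filter.eventually_ge_atTop 1] with x hx
      have hx0 : (0:ℝ) < (x:ℝ) := by exact_mod_cast hx
      have hsub : (Finset.Icc 1 x).filter (fun n => n ∈ NPH {p} H)
          ⊆ H.biUnion (fun h => (Finset.Icc 1 x).filter
            (fun n => Odd ((n + h).factorization p))) := by
        intro n hn
        rw [Finset.mem_filter] at hn
        obtain ⟨h, hh, hodd⟩ := mem_NPH_exists p H n hn.2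
        exact Finset.mem_biUnion.mpr ⟨h, hh, Finset.mem_filter.mpr ⟨hn.1, hodd⟩⟩
      have hcnt : (countIn (NPH {p} H) x : ℝ)
          ≤ d * ((x : ℝ)/((p:ℝ)+1) + (x:ℝ)*(1/(p:ℝ))^(2*k+1) + (2*(k:ℝ)+1)) := by
        have h1 : countIn (NPH {p} H) x
            ≤ ∑ h ∈ H, ((Finset.Icc 1 x).filter
              (fun n => Odd ((n + h).factorization p))).card :=
          (Finset.card_le_card hsub).trans Finset.card_biUnion_le
        calc (countIn (NPH {p} H) x : ℝ)
            ≤ ∑ h ∈ H, (((Finset.Icc 1 x).filter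
                (fun n => Odd ((n + h).factorization p))).card : ℝ) := by
              exact_mod_cast h1
          _ ≤ ∑ _h ∈ H, ((x : ℝ)/((p:ℝ)+1) + (x:ℝ)*(1/(p:ℝ))^(2*k+1) + (2*(k:ℝ)+1)) :=
              Finset.sum_le_sum (fun h _ => count_odd_le p hp h x k)
          _ = d * _ := by rw [Finset.sum_const, nsmul_eq_mul]
      have hstep : f x ≤ d * ((x : ℝ)/((p:ℝ)+1) + (x:ℝ)*(1/(p:ℝ))^(2*k+1)
          + (2*(k:ℝ)+1)) / (x:ℝ) := by
        rw [hf]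
        exact div_le_div_of_nonneg_right hcnt hx0.le
      have heq : d * ((x : ℝ)/((p:ℝ)+1) + (x:ℝ)*(1/(p:ℝ))^(2*k+1)
          + (2*(k:ℝ)+1)) / (x:ℝ) = g x := by
        rw [hgdef, hL]
        field_simp
      rw [heq] at hstep
      exact hstep
    calc Filter.limsup f Filter.atTop
        ≤ Filter.limsup g Filter.atTop :=
          Filter.limsup_le_limsup hfg (Filter.isCoboundedUnder_le_of_le _ hf0)
            hgt.isBoundedUnder_le
      _ = L := hgt.limsup_eq
  have hr0 : (0:ℝ) ≤ 1/(p:ℝ) := by positivity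
  have hr1 : (1/(p:ℝ)) < 1 := by
    rw [div_lt_one hppos]
    exact_mod_cast hp.one_lt
  have hlim : Filter.Tendsto (fun k : ℕ => d/((p:ℝ)+1) + d*(1/(p:ℝ))^(2*k+1))
      Filter.atTop (nhds (d/((p:ℝ)+1))) := by
    have h1 : Filter.Tendsto (fun k : ℕ => ((1/(p:ℝ))^2)^k) Filter.atTop (nhds 0) :=
      tendsto_pow_atTop_nhds_zero_of_lt_one (by positivity) (by nlinarith)
    have h2 : Filter.Tendsto (fun k : ℕ => d/((p:ℝ)+1) + d * (((1/(p:ℝ))^2)^k * (1/(p:ℝ))))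
        Filter.atTop (nhds (d/((p:ℝ)+1) + d*(0*(1/(p:ℝ))))) :=
      tendsto_const_nhds.add (((h1.mul_const _)).const_mul d)
    simp only [zero_mul, mul_zero, add_zero] at h2
    refine h2.congr (fun k => ?_)
    rw [← pow_mul, ← pow_succ]
  exact ge_of_tendsto' hlim key
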